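/- Let H = (V,H) be a simple boolean representable simplicial complex of dimension ≥ 2 (P₂(V) ⊆ H and some face has 3 elements). Then the number of connected components of the graph of flats Γ Fl(H) equals the number of connected components of the Hasse-diagram graph of the proper part of the lattice of flats, Δ(Fl(H))*. -/

import Mathlib

open scoped Classical

variable {V : Type}

def IsSC (faces : Set (Finset V)) : Prop :=
  (∀ v : V, ({v} : Finset V) ∈ faces) ∧
    ∀ ⦃X Y : Finset V⦄, X ∈ faces → Y ⊆ X → Y ∈ faces

def IsFlat (faces : Set (Finset V)) (F : Set V) : Prop :=
  ∀ I ∈ faces, (I : Set V) ⊆ F → ∀ p ∉ F, insert p I ∈ faces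

def cl (faces : Set (Finset V)) (X : Set V) : Set V :=
  ⋂₀ {F : Set V | IsFlat faces F ∧ X ⊆ F}

def BRep (faces : Set (Finset V)) : Prop :=
  ∀ X ∈ faces, ∃ (k : ℕ) (F : Fin (k + 1) → Set V) (x : Fin k → V),
    (∀ i, IsFlat faces (F i)) ∧ StrictMono F ∧ Function.Injective x ∧
    (∀ i : Fin k, x i ∈ F i.succ \ F i.castSucc) ∧
    X = Finset.image x Finset.univ

def skel (faces : Set (Finset V)) : SimpleGraph V where
  Adj p q := p ≠ q ∧ ({p, q} : Finset V) ∈ faces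
  symm := by
    constructor
    rintro p q ⟨h1, h2⟩
    exact ⟨h1.symm, by rwa [Finset.pair_comm]⟩
  loopless := by constructor; rintro p ⟨h, _⟩; exact h rfl

def flatGraph (faces : Set (Finset V)) : SimpleGraph V where
  Adj p q := p ≠ q ∧ cl faces {p, q} ≠ Set.univ
  symm := by
    constructor
    rintro p q ⟨h1, h2⟩
    exact ⟨h1.symm, by rwa [Set.pair_comm]⟩
  loopless := by constructor; rintro p ⟨h, _⟩; exact h rfl
def hasseGraph (faces : Set (Finset V)) :
    SimpleGraph {F : Set V // IsFlat faces F ∧ F ≠ ∅ ∧ F ≠ Set.univ} where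
  Adj a b :=
    (a.1 ⊂ b.1 ∧ ∀ c : Set V, IsFlat faces c → ¬(a.1 ⊂ c ∧ c ⊂ b.1)) ∨
    (b.1 ⊂ a.1 ∧ ∀ c : Set V, IsFlat faces c → ¬(b.1 ⊂ c ∧ c ⊂ a.1))
  symm := by constructor; rintro a b (h | h) <;> [exact Or.inr h; exact Or.inl h]
  loopless := by constructor; rintro a (⟨h, _⟩ | ⟨h, _⟩) <;> exact h.ne rfl


lemma cl_flat {faces : Set (Finset V)} (X : Set V) : IsFlat faces (cl faces X) := by
  intro I hI hsub p hp
  rw [cl, Set.mem_sInter] at hp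
  push_neg at hp
  obtain ⟨F, hF, hpF⟩ := hp
  exact hF.1 I hI (hsub.trans (Set.sInter_subset_of_mem hF)) p hpF

lemma subset_cl {faces : Set (Finset V)} (X : Set V) : X ⊆ cl faces X :=
  Set.subset_sInter fun _ hF => hF.2

lemma cl_subset {faces : Set (Finset V)} {X F : Set V} (hF : IsFlat faces F)
    (hX : X ⊆ F) : cl faces X ⊆ F :=
  Set.sInter_subset_of_mem ⟨hF, hX⟩

lemma singleton_flat {faces : Set (Finset V)} (hsc : IsSC faces)
    (hsimple : ∀ p q : V, p ≠ q → ({p, q} : Finset V) ∈ faces) (p : V) :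
    IsFlat faces ({p} : Set V) := by
  intro I hI hsub q hq
  have hq' : q ≠ p := by simpa using hq
  have hIs : I ⊆ ({p} : Finset V) := fun x hx => by simpa using hsub hx
  rcases Finset.subset_singleton_iff.1 hIs with rfl | rfl
  · simpa using hsc.1 q
  · exact hsimple q p hq'

section Main

variable [Fintype V]

/-- Proper flats subtype. -/
abbrev PF (faces : Set (Finset V)) := {F : Set V // IsFlat faces F ∧ F ≠ ∅ ∧ F ≠ Set.univ}

lemma chain_reach {faces : Set (Finset V)} :
    ∀ (n : ℕ) (F G : PF faces), (G.1 \ F.1).ncard ≤ n → F.1 ⊆ G.1 →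
      (hasseGraph faces).Reachable F G := by
  intro n
  induction n with
  | zero =>
    intro F G hcard hsub
    have hdiff : G.1 \ F.1 = ∅ := by
      have := Set.ncard_eq_zero (Set.toFinite _) |>.1 (Nat.le_zero.1 hcard)
      exact this
    have : G.1 ⊆ F.1 := fun x hx => by
      by_contra hxF
      exact absurd (Set.mem_diff x |>.2 ⟨hx, hxF⟩) (by simp [hdiff])
    have : F = G := Subtype.ext (Set.Subset.antisymm hsub this)
    exact this ▸ SimpleGraph.Reachable.refl F
  | succ n ih =>
    intro F G hcard hsub
    by_cases heq : F.1 = G.1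
    · exact (Subtype.ext heq) ▸ SimpleGraph.Reachable.refl F
    have hss : F.1 ⊂ G.1 := HasSubset.Subset.ssubset_of_ne hsub heq
    -- pick a flat c with F ⊂ c ⊆ G of minimal ncard
    set S : Set (Set V) := {c | IsFlat faces c ∧ F.1 ⊂ c ∧ c ⊆ G.1} with hS
    have hGS : G.1 ∈ S := ⟨G.2.1, hss, subset_rfl⟩
    obtain ⟨c, hcS, hmin⟩ := Set.exists_min_image S Set.ncard (Set.toFinite S) ⟨G.1, hGS⟩
    obtain ⟨hcflat, hFc, hcG⟩ := hcS
    -- c is a proper flat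
    have hcne : c ≠ ∅ := by
      intro h
      have := hFc.1
      rw [h] at this
      exact F.2.2.1 (Set.subset_empty_iff.1 this)
    have hcuniv : c ≠ Set.univ := by
      intro h
      exact G.2.2.2 (Set.eq_univ_of_univ_subset (h ▸ hcG))
    set C : PF faces := ⟨c, hcflat, hcne, hcuniv⟩ with hC
    -- F is covered by c
    have hadj : (hasseGraph faces).Adj F C := by
      left
      refine ⟨hFc, fun d hd ⟨hFd, hdc⟩ => ?_⟩
      have hdS : d ∈ S := ⟨hd, hFd, hdc.subset.trans hcG⟩
      have := hmin d hdS
      have hlt : d.ncard < c.ncard := Set.ncard_lt_ncard hdc (Set.toFinite _)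
      omega
    -- recurse from C to G
    have hrec : (hasseGraph faces).Reachable C G := by
      apply ih C G ?_ hcG
      show (G.1 \ c).ncard ≤ n
      have hsub2 : G.1 \ c ⊂ G.1 \ F.1 := by
        constructor
        · exact Set.diff_subset_diff_right hFc.subset
        · intro hcontra
          obtain ⟨x, hxc, hxF⟩ := Set.exists_of_ssubset hFc
          have hxG : x ∈ G.1 \ F.1 := ⟨hcG hxc, hxF⟩
          have := hcontra hxG
          exact this.2 hxc
      have := Set.ncard_lt_ncard hsub2 (Set.toFinite _)
      omega
    exact (hadj.reachable).trans hrec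

lemma walk_const {α β : Type*} {G : SimpleGraph α} (f : α → β)
    (h : ∀ v w, G.Adj v w → f v = f w) :
    ∀ v w (p : G.Walk v w), p.IsPath → f v = f w := by
  suffices h' : ∀ v w (p : G.Walk v w), f v = f w from fun v w p _ => h' v w p
  intro v w p
  induction p with
  | nil => rfl
  | cons ha _ ih => exact (h _ _ ha).trans ih

end Main

theorem flatGraph_components_eq_hasse_components [Fintype V] [Nonempty V]
    {faces : Set (Finset V)} (hsc : IsSC faces) (hbr : BRep faces)
    (hsimple : ∀ p q : V, p ≠ q → ({p, q} : Finset V) ∈ faces)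
    (hdim : ∃ X ∈ faces, X.card = 3) :
    Nat.card (flatGraph faces).ConnectedComponent =
      Nat.card (hasseGraph faces).ConnectedComponent := by
  classical
  obtain ⟨X, hX, hX3⟩ := hdim
  have hcardV : 3 ≤ Fintype.card V := hX3 ▸ Finset.card_le_univ X
  have hsne : ∀ p : V, ({p} : Set V) ≠ Set.univ := by
    intro p h
    obtain ⟨q, hq⟩ := Fintype.exists_ne_of_one_lt_card (by omega) p
    have : q ∈ ({p} : Set V) := h ▸ Set.mem_univ q
    exact hq (by simpa using this)
  let sflat : V → PF faces := fun p =>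
    ⟨{p}, singleton_flat hsc hsimple p, by simp, hsne p⟩
  have hφ : ∀ p q, (flatGraph faces).Adj p q →
      (hasseGraph faces).connectedComponentMk (sflat p) =
        (hasseGraph faces).connectedComponentMk (sflat q) := by
    rintro p q ⟨hpq, hcl⟩
    have hpcl : p ∈ cl faces {p, q} := subset_cl _ (by simp)
    have hqcl : q ∈ cl faces {p, q} := subset_cl _ (by simp)
    set Gf : PF faces := ⟨cl faces {p, q}, cl_flat _,
      Set.nonempty_iff_ne_empty.1 ⟨p, hpcl⟩, hcl⟩ with hGf
    have h1 : (hasseGraph faces).Reachable (sflat p) Gf :=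
      chain_reach _ _ _ le_rfl (by show ({p} : Set V) ⊆ cl faces {p, q}; simpa using hpcl)
    have h2 : (hasseGraph faces).Reachable (sflat q) Gf :=
      chain_reach _ _ _ le_rfl (by show ({q} : Set V) ⊆ cl faces {p, q}; simpa using hqcl)
    exact SimpleGraph.ConnectedComponent.sound (h1.trans h2.symm)
  have hne : ∀ F : PF faces, F.1.Nonempty := fun F =>
    Set.nonempty_iff_ne_empty.2 F.2.2.1
  have key : ∀ (F G : PF faces), F.1 ⊆ G.1 → ∀ p ∈ F.1, ∀ q ∈ G.1,
      (flatGraph faces).Reachable p q := by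
    intro F G hsub p hp q hq
    by_cases h : p = q
    · exact h ▸ SimpleGraph.Reachable.refl p
    · refine SimpleGraph.Adj.reachable ⟨h, fun hclu => ?_⟩
      have hsub2 : cl faces {p, q} ⊆ G.1 := by
        refine cl_subset G.2.1 ?_
        intro x hx
        rcases hx with rfl | hx
        · exact hsub hp
        · exact (Set.mem_singleton_iff.1 hx) ▸ hq
      rw [hclu] at hsub2
      exact G.2.2.2 (Set.eq_univ_of_univ_subset hsub2)
  have hψ : ∀ F G : PF faces, (hasseGraph faces).Adj F G →
      (flatGraph faces).connectedComponentMk (hne F).choose =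
        (flatGraph faces).connectedComponentMk (hne G).choose := by
    intro F G hadj
    rcases hadj with ⟨hss, -⟩ | ⟨hss, -⟩
    · exact SimpleGraph.ConnectedComponent.sound
        (key F G hss.subset _ (hne F).choose_spec _ (hne G).choose_spec)
    · exact (SimpleGraph.ConnectedComponent.sound
        (key G F hss.subset _ (hne G).choose_spec _ (hne F).choose_spec)).symm
  refine Nat.card_congr
    ⟨SimpleGraph.ConnectedComponent.lift
        (fun p => (hasseGraph faces).connectedComponentMk (sflat p)) (walk_const _ hφ),
      SimpleGraph.ConnectedComponent.lift
        (fun F => (flatGraph faces).connectedComponentMk (hne F).choose) (walk_const _ hψ),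
      ?_, ?_⟩
  · intro c
    induction c using SimpleGraph.ConnectedComponent.ind with
    | _ p =>
      simp only [SimpleGraph.ConnectedComponent.lift_mk]
      have : (hne (sflat p)).choose = p := by
        have := (hne (sflat p)).choose_spec
        exact Set.mem_singleton_iff.1 this
      rw [this]
  · intro c
    induction c using SimpleGraph.ConnectedComponent.ind with
    | _ F =>
      simp only [SimpleGraph.ConnectedComponent.lift_mk]
      refine SimpleGraph.ConnectedComponent.sound ?_
      refine chain_reach _ (sflat (hne F).choose) F le_rfl ?_
      show ({(hne F).choose} : Set V) ⊆ F.1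
      simpa using (hne F).choose_spec
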